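/- Let R be an associative unital ring (not necessarily commutative), α : ℤ → R a family of elements, and S_s^k(n) the associated non-commutative Svinin polynomials. Let m ≥ 0 be an integer and let d_0, d_2, …, d_{2m} be central elements of R. Define P_{0,n} := Σ_{r=0}^{m} d_{2r} · S_{r+1}^r(n+r−1). Then the following are equivalent: (i) for every n ∈ ℤ, P_{0,n−1} · α_{n−1} − α_n · P_{0,n+1} = 1; (ii) there exists an element c_0 ∈ R such that α satisfies the m-th member of the non-commutative discrete first Painlevé hierarchy, i.e. Σ_{r=1}^{m+1} d_{2(r−1)} · S_r^r(n+r−1) + (n·1 − c_0) = 0 for every n ∈ ℤ (where n·1 denotes the image of the integer n in R). -/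

import Mathlib

/-- Non-commutative Svinin polynomials: `svinin α s k n` is `S_s^k(n)`, defined by
`S_s^0(n) = 1` and `S_s^k(n) = Σ_{j=0}^{s−1} α_{n−k−j+1} · S_{s−j}^{k−1}(n−j)` for `k ≥ 1`. -/
def svinin {R : Type*} [Ring R] (α : ℤ → R) : ℕ → ℕ → ℤ → R
  | _, 0, _ => 1
  | s, k + 1, n =>
      ∑ j ∈ Finset.range s,
        α (n - ((k : ℤ) + 1) - (j : ℤ) + 1) * svinin α (s - j) k (n - (j : ℤ))

/-- `P0 α m d n` is `P_{0,n} = Σ_{r=0}^{m} d_{2r} · S_{r+1}^r(n+r−1)`,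
where `d r` stands for `d_{2r}`. -/
def P0 {R : Type*} [Ring R] (α : ℤ → R) (m : ℕ) (d : ℕ → R) (n : ℤ) : R :=
  ∑ r ∈ Finset.range (m + 1), d r * svinin α (r + 1) r (n + (r : ℤ) - 1)

lemma svinin_succ {R : Type*} [Ring R] (α : ℤ → R) (s k : ℕ) (n : ℤ) :
    svinin α s (k + 1) n = ∑ j ∈ Finset.range s,
      α (n - (k : ℤ) - (j : ℤ)) * svinin α (s - j) k (n - (j : ℤ)) := by
  rw [svinin]
  refine Finset.sum_congr rfl fun j hj => ?_
  have h : n - ((k : ℤ) + 1) - (j : ℤ) + 1 = n - k - j := by ring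
  rw [h]

lemma svinin_tri {M : Type*} [AddCommMonoid M] (s : ℕ) (g : ℕ → ℕ → M) :
    ∑ l ∈ Finset.range s, ∑ j ∈ Finset.range (l + 1), g j (l - j)
      = ∑ j ∈ Finset.range s, ∑ i ∈ Finset.range (s - j), g j i := by
  induction s with
  | zero => simp
  | succ s ih =>
    rw [Finset.sum_range_succ, ih, Finset.sum_range_succ, Finset.sum_range_succ]
    have h1 : ∀ j ∈ Finset.range s, ∑ i ∈ Finset.range (s + 1 - j), g j i
        = (∑ i ∈ Finset.range (s - j), g j i) + g j (s - j) := by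
      intro j hj
      rw [Finset.mem_range] at hj
      rw [show s + 1 - j = (s - j) + 1 by omega, Finset.sum_range_succ]
    rw [Finset.sum_congr rfl h1, Finset.sum_add_distrib]
    have h2 : s + 1 - s = 1 := by omega
    rw [h2, Finset.sum_range_one, Nat.sub_self]
    abel

lemma svinin_dual {R : Type*} [Ring R] (α : ℤ → R) :
    ∀ (k s : ℕ) (n : ℤ), svinin α s (k + 1) n
      = ∑ j ∈ Finset.range s, svinin α (j + 1) k (n - 1) * α (n - (j : ℤ)) := by
  intro k
  induction k with
  | zero =>
    intro s n
    rw [svinin_succ]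
    simp only [svinin]
    refine Finset.sum_congr rfl fun j hj => ?_
    rw [mul_one, one_mul]
    congr 1
    push_cast
    ring
  | succ k ih =>
    intro s n
    rw [svinin_succ]
    have hL : ∀ j ∈ Finset.range s,
        α (n - ((k + 1 : ℕ) : ℤ) - (j : ℤ)) * svinin α (s - j) (k + 1) (n - (j : ℤ))
          = ∑ i ∈ Finset.range (s - j),
              α (n - 1 - (k : ℤ) - (j : ℤ))
                * (svinin α (i + 1) k (n - 1 - (j : ℤ)) * α (n - (j : ℤ) - (i : ℤ))) := by
      intro j hj
      rw [ih (s - j) (n - (j : ℤ)), Finset.mul_sum]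
      refine Finset.sum_congr rfl fun i hi => ?_
      have h1 : n - ((k + 1 : ℕ) : ℤ) - (j : ℤ) = n - 1 - k - j := by push_cast; ring
      have h2 : (n : ℤ) - (j : ℤ) - 1 = n - 1 - (j : ℤ) := by ring
      rw [h1, h2]
    rw [Finset.sum_congr rfl hL]
    have hR : ∀ l ∈ Finset.range s,
        svinin α (l + 1) (k + 1) (n - 1) * α (n - (l : ℤ))
          = ∑ j ∈ Finset.range (l + 1),
              α (n - 1 - (k : ℤ) - (j : ℤ))
                * (svinin α ((l - j) + 1) k (n - 1 - (j : ℤ))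
                    * α (n - (j : ℤ) - ((l - j : ℕ) : ℤ))) := by
      intro l hl
      rw [svinin_succ, Finset.sum_mul]
      refine Finset.sum_congr rfl fun j hj => ?_
      rw [Finset.mem_range] at hj
      have h3 : l + 1 - j = (l - j) + 1 := by omega
      have h5 : (n : ℤ) - (l : ℤ) = n - (j : ℤ) - ((l - j : ℕ) : ℤ) := by
        rw [Nat.cast_sub (by omega)]; ring
      rw [h3, h5, mul_assoc]
    rw [Finset.sum_congr rfl hR,
      svinin_tri s (fun j i => α (n - 1 - (k : ℤ) - (j : ℤ))
        * (svinin α (i + 1) k (n - 1 - (j : ℤ)) * α (n - (j : ℤ) - (i : ℤ))))]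

lemma svinin_step {R : Type*} [Ring R] (α : ℤ → R) (r : ℕ) (N : ℤ) :
    svinin α (r + 1) (r + 1) (N - 1) - svinin α (r + 1) (r + 1) N
      = svinin α (r + 1) r (N - 2) * α (N - (r : ℤ) - 1)
        - α (N - (r : ℤ)) * svinin α (r + 1) r N := by
  rw [svinin_dual α r (r + 1) (N - 1), svinin_succ α (r + 1) r N,
    Finset.sum_range_succ, Finset.sum_range_succ']
  have hA : (∑ j ∈ Finset.range r, svinin α (j + 1) r (N - 1 - 1) * α (N - 1 - (j : ℤ)))
      = svinin α r (r + 1) (N - 1) := (svinin_dual α r r (N - 1)).symm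
  have hB : (∑ j ∈ Finset.range r,
        α (N - (r : ℤ) - ((j + 1 : ℕ) : ℤ)) * svinin α (r + 1 - (j + 1)) r (N - ((j + 1 : ℕ) : ℤ)))
      = svinin α r (r + 1) (N - 1) := by
    rw [svinin_succ α r r (N - 1)]
    refine Finset.sum_congr rfl fun j hj => ?_
    have e1 : N - (r : ℤ) - ((j + 1 : ℕ) : ℤ) = N - 1 - r - j := by push_cast; ring
    have e2 : r + 1 - (j + 1) = r - j := by omega
    have e3 : N - ((j + 1 : ℕ) : ℤ) = N - 1 - j := by push_cast; ring
    rw [e1, e2, e3]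
  rw [hA, hB]
  have e4 : svinin α (r + 1) r (N - 1 - 1) * α (N - 1 - (r : ℤ))
      = svinin α (r + 1) r (N - 2) * α (N - (r : ℤ) - 1) := by
    have : N - 1 - 1 = N - 2 := by ring
    rw [this]
    congr 1
    ring
  have e5 : α (N - (r : ℤ) - ((0 : ℕ) : ℤ)) * svinin α (r + 1 - 0) r (N - ((0 : ℕ) : ℤ))
      = α (N - (r : ℤ)) * svinin α (r + 1) r N := by
    norm_num
  rw [e4, e5]
  abel

def Qh {R : Type*} [Ring R] (α : ℤ → R) (m : ℕ) (d : ℕ → R) (n : ℤ) : R :=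
  ∑ r ∈ Finset.range (m + 1), d r * svinin α (r + 1) (r + 1) (n + (r : ℤ))

lemma key {R : Type*} [Ring R] (α : ℤ → R) (m : ℕ) (d : ℕ → R)
    (hd : ∀ k ≤ m, d k ∈ Set.center R) (n : ℤ) :
    P0 α m d (n - 1) * α (n - 1) - α n * P0 α m d (n + 1)
      = Qh α m d (n - 1) - Qh α m d n := by
  unfold P0 Qh
  rw [Finset.sum_mul, Finset.mul_sum, ← Finset.sum_sub_distrib, ← Finset.sum_sub_distrib]
  refine Finset.sum_congr rfl fun r hr => ?_
  rw [Finset.mem_range] at hr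
  have hc : ∀ x : R, α n * (d r * x) = d r * (α n * x) := by
    intro x
    rw [← mul_assoc, ← (Set.mem_center_iff.mp (hd r (by omega))).comm (α n), mul_assoc]
  rw [hc, mul_assoc, ← mul_sub, ← mul_sub]
  congr 1
  have hs := svinin_step α r (n + (r : ℤ))
  rw [show n + (r : ℤ) - (r : ℤ) - 1 = n - 1 by ring,
    show n + (r : ℤ) - (r : ℤ) = n by ring,
    show n + (r : ℤ) - 2 = n - 1 + (r : ℤ) - 1 by ring,
    show n + (r : ℤ) - 1 = n - 1 + (r : ℤ) by ring] at hs
  rw [show n + 1 + (r : ℤ) - 1 = n + (r : ℤ) by ring]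
  exact hs.symm

/-- The compatibility equation `P_{0,n−1} · α_{n−1} − α_n · P_{0,n+1} = 1` for all `n` holds
iff `α` satisfies the `m`-th member of the non-commutative discrete first Painlevé hierarchy
`Σ_{r=1}^{m+1} d_{2(r−1)} · S_r^r(n+r−1) + (n·1 − c_0) = 0` for some constant `c_0`. -/
theorem dPIm_noncommutative {R : Type*} [Ring R] (α : ℤ → R)
    (m : ℕ) (d : ℕ → R) (hd : ∀ k ≤ m, d k ∈ Set.center R) :
    (∀ n : ℤ, P0 α m d (n - 1) * α (n - 1) - α n * P0 α m d (n + 1) = 1) ↔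
    (∃ c₀ : R, ∀ n : ℤ,
      (∑ r ∈ Finset.Icc 1 (m + 1), d (r - 1) * svinin α r r (n + (r : ℤ) - 1))
        + ((n : R) - c₀) = 0) := by
  have hreidx : ∀ n : ℤ,
      (∑ r ∈ Finset.Icc 1 (m + 1), d (r - 1) * svinin α r r (n + (r : ℤ) - 1))
        = Qh α m d n := by
    intro n
    rw [← Finset.Ico_add_one_right_eq_Icc, Finset.sum_Ico_eq_sum_range,
      show m + 1 + 1 - 1 = m + 1 by omega]
    unfold Qh
    refine Finset.sum_congr rfl fun r hr => ?_
    have e1 : 1 + r - 1 = r := by omega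
    have e2 : 1 + r = r + 1 := by omega
    have e3 : n + ((r + 1 : ℕ) : ℤ) - 1 = n + r := by push_cast; ring
    rw [e1, e2, e3]
  constructor
  · intro h
    refine ⟨Qh α m d 0, fun n => ?_⟩
    rw [hreidx]
    have main : ∀ n : ℤ, Qh α m d n = Qh α m d 0 - (n : R) := by
      intro n
      induction n using Int.induction_on with
      | zero => simp
      | succ i ih =>
        have hk := (key α m d hd ((i : ℤ) + 1)).symm
        rw [h ((i : ℤ) + 1), show (i : ℤ) + 1 - 1 = (i : ℤ) by ring, ih,
          sub_eq_iff_eq_add] at hk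
        -- hk : Qh α m d 0 - ↑↑i = 1 + Qh α m d (↑i + 1)
        have h2 : Qh α m d ((i : ℤ) + 1) = Qh α m d 0 - ((i : ℤ) : R) - 1 := by
          rw [eq_sub_iff_add_eq, eq_sub_iff_add_eq]
          rw [sub_eq_iff_eq_add] at hk
          rw [hk]
          abel
        rw [h2]
        push_cast
        abel
      | pred i ih =>
        have hk := (key α m d hd (-(i : ℤ))).symm
        rw [h (-(i : ℤ)), sub_eq_iff_eq_add] at hk
        -- hk : Qh α m d (-↑i - 1) = 1 + Qh α m d (-↑i)
        rw [hk, ih]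
        push_cast
        abel
    rw [main n]
    abel
  · rintro ⟨c₀, h⟩
    intro n
    have hq : ∀ n : ℤ, Qh α m d n = c₀ - (n : R) := by
      intro n
      have := h n
      rw [hreidx, add_eq_zero_iff_eq_neg, neg_sub] at this
      exact this
    rw [key α m d hd n, hq, hq]
    push_cast
    abel
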